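/- Fix q ≥ 2, d ≥ 1 and an integer y with base-q digits y_1,…,y_d. Let X be uniformly distributed over {0,…,q^d − 1} with base-q digits X_1,…,X_d (these are i.i.d. uniform on {0,…,q−1}). For each i, the probability that the carry C(X,y)_i equals 1 is at most (y_i + 1)/q. -/
import Mathlib

/-- The i-th base-q digit of w. -/
def digit (q w i : ℕ) : ℕ := w / q ^ i % q

/-- Carry bits of base-q addition: `carry q x y 0 = 0`, and the carry produced
at digit i (carry into position i+1) is `carry q x y (i+1)`. -/
def carry (q x y : ℕ) : ℕ → ℕ
  | 0 => 0
  | i + 1 => if q ≤ digit q x i + digit q y i + carry q x y i then 1 else 0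

lemma mod_pow_succ' (q x i : ℕ) : x % q ^ (i + 1) = x % q ^ i + digit q x i * q ^ i := by
  have h : x % (q ^ i * q) / q ^ i = x / q ^ i % q := Nat.mod_mul_right_div_self x (q^i) q
  have h2 : x % (q ^ i * q) % q ^ i = x % q ^ i := Nat.mod_mod_of_dvd x ⟨q, rfl⟩
  have h3 := Nat.div_add_mod (x % (q ^ i * q)) (q ^ i)
  rw [h, h2] at h3
  have e : q ^ i * (x / q ^ i % q) = (x / q ^ i % q) * q ^ i := Nat.mul_comm _ _
  rw [pow_succ]
  unfold digit
  omega

lemma key (q M a b xd yd c : ℕ) (ha : a < M) (hb : b < M)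
    (hc : c = 0 ∨ c = 1) (hci : c = 1 ↔ M ≤ a + b) :
    M * q ≤ a + xd * M + (b + yd * M) ↔ q ≤ xd + yd + c := by
  have e0 : M * q = q * M := Nat.mul_comm M q
  rcases hc with rfl | rfl
  · have hab : a + b < M := by
      by_contra hh
      push_neg at hh
      exact absurd (hci.mpr hh) (by simp)
    constructor
    · intro h
      by_contra hlt
      push_neg at hlt
      have h2 : (xd + yd + 1) * M ≤ q * M := Nat.mul_le_mul_right M (by omega)
      have e : (xd + yd + 1) * M = xd * M + yd * M + M := by ring
      omega
    · intro h
      have h2 : q * M ≤ (xd + yd) * M := Nat.mul_le_mul_right M (by omega)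
      have e : (xd + yd) * M = xd * M + yd * M := by ring
      omega
  · have hab : M ≤ a + b := hci.mp rfl
    constructor
    · intro h
      by_contra hlt
      push_neg at hlt
      have h2 : (xd + yd + 2) * M ≤ q * M := Nat.mul_le_mul_right M (by omega)
      have e : (xd + yd + 2) * M = xd * M + yd * M + M + M := by ring
      omega
    · intro h
      have h2 : q * M ≤ (xd + yd + 1) * M := Nat.mul_le_mul_right M (by omega)
      have e : (xd + yd + 1) * M = xd * M + yd * M + M := by ring
      omega

lemma carry_zero_or_one (q x y i : ℕ) : carry q x y i = 0 ∨ carry q x y i = 1 := by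
  cases i with
  | zero => exact Or.inl rfl
  | succ j => simp only [carry]; split <;> simp

lemma carry_eq_one_iff (q x y : ℕ) (i : ℕ) :
    carry q x y i = 1 ↔ q ^ i ≤ x % q ^ i + y % q ^ i := by
  induction i with
  | zero => simp [carry, Nat.mod_one]
  | succ i ih =>
    rcases Nat.eq_zero_or_pos q with rfl | hq
    · simp [carry, Nat.zero_pow]
    · have hxm : x % q ^ i < q ^ i := Nat.mod_lt _ (pow_pos hq i)
      have hym : y % q ^ i < q ^ i := Nat.mod_lt _ (pow_pos hq i)
      have hk := key q (q ^ i) (x % q ^ i) (y % q ^ i) (digit q x i) (digit q y i)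
        (carry q x y i) hxm hym (carry_zero_or_one q x y i) ih
      rw [mod_pow_succ' q x i, mod_pow_succ' q y i, pow_succ]
      simp only [carry, hk]
      split_ifs with h <;> simp [h]

open Finset in
lemma count_blocks (M : ℕ) (P : ℕ → Prop) [DecidablePred P] (n : ℕ) :
    ((Finset.range (M * n)).filter (fun x => P (x % M))).card
      = n * ((Finset.range M).filter P).card := by
  induction n with
  | zero => simp
  | succ n ih =>
    have hMn : M * (n + 1) = M * n + M := by ring
    rw [hMn, Finset.range_add, Finset.filter_union,
      Finset.card_union_of_disjoint, ih, Finset.filter_map, Finset.card_map]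
    · have hcong : (Finset.range M).filter ((fun x => P (x % M)) ∘ (addLeftEmbedding (M * n)))
          = (Finset.range M).filter P := by
        apply Finset.filter_congr
        intro r hr
        simp only [Function.comp, addLeftEmbedding_apply]
        rw [Nat.add_comm, Nat.add_mul_mod_self_left,
          Nat.mod_eq_of_lt (Finset.mem_range.mp hr)]
      rw [hcong]; ring
    · rw [Finset.disjoint_left]
      intro x hx hx'
      simp only [Finset.mem_filter, Finset.mem_range, Finset.mem_map,
        addLeftEmbedding_apply] at hx hx'
      obtain ⟨⟨k, _, rfl⟩, -⟩ := hx'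
      omega

/-- For X uniform on {0,…,q^d−1}, the probability that the carry C(X,y)_i
equals 1 is at most (y_i + 1)/q. -/
theorem stmt_6 (q d : ℕ) (hq : 2 ≤ q) (hd : 1 ≤ d) (y i : ℕ) (hi : i < d) :
    ((Finset.range (q ^ d)).filter (fun x => carry q x y (i + 1) = 1)).card * q ≤
      (digit q y i + 1) * q ^ d := by
  set N := q ^ (i + 1) with hN
  set K := q ^ (d - (i + 1)) with hK
  set m := y % N with hm
  have hpow : q ^ d = N * K := by
    rw [hN, hK, ← pow_add]
    congr 1
    omega
  have hN0 : 0 < N := pow_pos (by omega) _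
  have hmN : m < N := Nat.mod_lt _ hN0
  have hcard : ((Finset.range (q ^ d)).filter (fun x => carry q x y (i + 1) = 1)).card
      = K * m := by
    have h1 : (Finset.range (q ^ d)).filter (fun x => carry q x y (i + 1) = 1)
        = (Finset.range (N * K)).filter (fun x => N ≤ x % N + m) := by
      rw [← hpow]
      apply Finset.filter_congr
      intro x _
      simp [carry_eq_one_iff, hN, hm]
    rw [h1, count_blocks N (fun r => N ≤ r + m) K]
    have h2 : (Finset.range N).filter (fun r => N ≤ r + m) = Finset.Ico (N - m) N := by
      ext r
      simp only [Finset.mem_filter, Finset.mem_range, Finset.mem_Ico]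
      omega
    rw [h2, Nat.card_Ico]
    congr 1
    omega
  rw [hcard]
  have hyd : m ≤ (digit q y i + 1) * q ^ i := by
    have h1 : m = y % q ^ i + digit q y i * q ^ i := by
      rw [hm, hN]; exact mod_pow_succ' q y i
    have h2 : y % q ^ i < q ^ i := Nat.mod_lt _ (pow_pos (by omega) _)
    have h3 : (digit q y i + 1) * q ^ i = digit q y i * q ^ i + q ^ i := by ring
    omega
  calc K * m * q ≤ K * ((digit q y i + 1) * q ^ i) * q :=
        Nat.mul_le_mul_right q (Nat.mul_le_mul_left K hyd)
    _ = (digit q y i + 1) * (N * K) := by rw [hN, pow_succ]; ring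
    _ = (digit q y i + 1) * q ^ d := by rw [hpow]
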